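/- Let $B$ be a $2\times 2$ complex matrix with top-left entry $b$. Then, as $z\to 0$, $\log\left\|\begin{pmatrix}1&0\\0&0\end{pmatrix}+zB\right\| = \log|1+bz| + O(|z|^2)\|B\|^2$, where $\|\cdot\|$ denotes the operator norm induced by the Euclidean norm on $\mathbb{C}^2$. More precisely, there is an absolute constant $C$ such that for all $z$ with $|z|\,\|B\|\le 1/2$, $\left|\log\left\|\begin{pmatrix}1&0\\0&0\end{pmatrix}+zB\right\| - \log|1+bz|\right| \le C|z|^2\|B\|^2$. -/

import Mathlib

noncomputable def opNorm2 (M : Matrix (Fin 2) (Fin 2) ℂ) : ℝ :=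
  ‖(Matrix.toEuclideanCLM (𝕜 := ℂ) (n := Fin 2)) M‖

lemma entry_le_opNorm2 (M : Matrix (Fin 2) (Fin 2) ℂ) (i j : Fin 2) :
    ‖M i j‖ ≤ opNorm2 M := by
  have h := (Matrix.toEuclideanCLM (𝕜 := ℂ) (n := Fin 2) M).le_opNorm
    ((WithLp.equiv 2 (Fin 2 → ℂ)).symm (Pi.single j 1))
  replace h : ‖(WithLp.equiv 2 (Fin 2 → ℂ)).symm (Matrix.toLin' M (Pi.single j 1))‖ ≤ ‖Matrix.toEuclideanCLM (𝕜 := ℂ) (n := Fin 2) M‖ * ‖(WithLp.equiv 2 (Fin 2 → ℂ)).symm (Pi.single j 1)‖ := h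
  have hx : ‖(WithLp.equiv 2 (Fin 2 → ℂ)).symm (Pi.single j 1)‖ = 1 := by
    rw [EuclideanSpace.norm_eq]
    fin_cases j <;> simp [Fin.sum_univ_two, Pi.single_apply]
  rw [hx, mul_one] at h
  refine le_trans ?_ h
  have hcomp : ‖((WithLp.equiv 2 (Fin 2 → ℂ)).symm (Matrix.toLin' M (Pi.single j 1))) i‖
      ≤ ‖(WithLp.equiv 2 (Fin 2 → ℂ)).symm (Matrix.toLin' M (Pi.single j 1))‖ := by
    rw [EuclideanSpace.norm_eq]
    refine le_trans (le_of_eq (Real.sqrt_sq (norm_nonneg _)).symm) ?_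
    apply Real.sqrt_le_sqrt
    exact Finset.single_le_sum
      (f := fun k => ‖((WithLp.equiv 2 (Fin 2 → ℂ)).symm (Matrix.toLin' M (Pi.single j 1))) k‖ ^ 2)
      (fun k _ => sq_nonneg _) (Finset.mem_univ i)
  refine le_trans (le_of_eq ?_) hcomp
  congr 1
  show M i j = (Matrix.mulVec M (Pi.single j 1)) i
  rw [Matrix.mulVec_single]; simp

lemma opNorm2_le_frob (M : Matrix (Fin 2) (Fin 2) ℂ) :
    opNorm2 M ≤ Real.sqrt (‖M 0 0‖^2 + ‖M 0 1‖^2 + ‖M 1 0‖^2 + ‖M 1 1‖^2) := by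
  have hS : (0:ℝ) ≤ ‖M 0 0‖^2 + ‖M 0 1‖^2 + ‖M 1 0‖^2 + ‖M 1 1‖^2 := by positivity
  apply ContinuousLinearMap.opNorm_le_bound _ (Real.sqrt_nonneg _)
  intro x
  set y : Fin 2 → ℂ := WithLp.equiv 2 (Fin 2 → ℂ) x with hy
  have hxe : x = (WithLp.equiv 2 (Fin 2 → ℂ)).symm y := rfl
  rw [hxe]; change ‖(WithLp.equiv 2 (Fin 2 → ℂ)).symm (Matrix.toLin' M y)‖ ≤ _ * _
  rw [EuclideanSpace.norm_eq, EuclideanSpace.norm_eq]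
  simp only [WithLp.equiv_symm_apply, WithLp.ofLp_toLp, Matrix.toLin'_apply, Matrix.mulVec, dotProduct,
    Fin.sum_univ_two]
  rw [← Real.sqrt_mul hS]
  apply Real.sqrt_le_sqrt
  have h0 : ‖M 0 0 * y 0 + M 0 1 * y 1‖ ≤ ‖M 0 0‖*‖y 0‖ + ‖M 0 1‖*‖y 1‖ :=
    (norm_add_le _ _).trans (by rw [norm_mul, norm_mul])
  have h1 : ‖M 1 0 * y 0 + M 1 1 * y 1‖ ≤ ‖M 1 0‖*‖y 0‖ + ‖M 1 1‖*‖y 1‖ :=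
    (norm_add_le _ _).trans (by rw [norm_mul, norm_mul])
  nlinarith [sq_nonneg (‖M 0 0‖*‖y 1‖ - ‖M 0 1‖*‖y 0‖), sq_nonneg (‖M 1 0‖*‖y 1‖ - ‖M 1 1‖*‖y 0‖),
    norm_nonneg (M 0 0 * y 0 + M 0 1 * y 1), norm_nonneg (M 1 0 * y 0 + M 1 1 * y 1),
    norm_nonneg (M 0 0), norm_nonneg (M 0 1), norm_nonneg (M 1 0), norm_nonneg (M 1 1),
    norm_nonneg (y 0), norm_nonneg (y 1)]

theorem stmt0 :
    ∃ C : ℝ, 0 < C ∧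
      ∀ (B : Matrix (Fin 2) (Fin 2) ℂ) (z : ℂ),
        ‖z‖ * opNorm2 B ≤ 1 / 2 →
          |Real.log (opNorm2 (!![1, 0; 0, 0] + z • B)) -
              Real.log ‖1 + B 0 0 * z‖| ≤ C * ‖z‖ ^ 2 * opNorm2 B ^ 2 := by
  refine ⟨6, by norm_num, ?_⟩
  intro B z hz
  set M : Matrix (Fin 2) (Fin 2) ℂ := !![1, 0; 0, 0] + z • B with hM
  set t : ℝ := ‖z‖ * opNorm2 B with ht
  have ht0 : 0 ≤ t := mul_nonneg (norm_nonneg _) (norm_nonneg _)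
  set a : ℝ := ‖1 + B 0 0 * z‖ with ha
  have hM00 : M 0 0 = 1 + B 0 0 * z := by
    simp [hM, Matrix.add_apply, mul_comm]
  have hM01 : M 0 1 = z * B 0 1 := by simp [hM, Matrix.add_apply]
  have hM10 : M 1 0 = z * B 1 0 := by simp [hM, Matrix.add_apply]
  have hM11 : M 1 1 = z * B 1 1 := by simp [hM, Matrix.add_apply]
  -- entry bounds for B
  have hB : ∀ i j, ‖z * B i j‖ ≤ t := by
    intro i j
    rw [norm_mul]
    exact mul_le_mul_of_nonneg_left (entry_le_opNorm2 B i j) (norm_nonneg z)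
  -- lower bound for a
  have haB : ‖B 0 0 * z‖ ≤ t := by rw [mul_comm]; exact hB 0 0
  have ha2 : (1:ℝ)/2 ≤ a := by
    have h1 : ‖(1:ℂ)‖ ≤ ‖1 + B 0 0 * z‖ + ‖B 0 0 * z‖ := by
      calc ‖(1:ℂ)‖ = ‖(1 + B 0 0 * z) - B 0 0 * z‖ := by ring_nf
        _ ≤ ‖1 + B 0 0 * z‖ + ‖B 0 0 * z‖ := norm_sub_le _ _
    rw [norm_one] at h1
    have : t ≤ 1/2 := hz
    linarith
  have ha0 : (0:ℝ) < a := by linarith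
  -- lower bound on opNorm2 M
  have hlow : a ≤ opNorm2 M := by
    have := entry_le_opNorm2 M 0 0
    rwa [hM00] at this
  have hN0 : (0:ℝ) < opNorm2 M := lt_of_lt_of_le ha0 hlow
  -- upper bound on opNorm2 M
  have hub : opNorm2 M ≤ a + 3 * t^2 := by
    have h1 : opNorm2 M ≤ Real.sqrt (a^2 + 3 * t^2) := by
      refine (opNorm2_le_frob M).trans (Real.sqrt_le_sqrt ?_)
      rw [hM00, hM01, hM10, hM11]
      have h01 := hB 0 1; have h10 := hB 1 0; have h11 := hB 1 1
      nlinarith [norm_nonneg (z * B 0 1), norm_nonneg (z * B 1 0), norm_nonneg (z * B 1 1)]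
    refine h1.trans ?_
    have h2 : a^2 + 3 * t^2 ≤ (a + 3 * t^2)^2 := by nlinarith [sq_nonneg t, sq_nonneg (t^2)]
    calc Real.sqrt (a^2 + 3 * t^2) ≤ Real.sqrt ((a + 3 * t^2)^2) := Real.sqrt_le_sqrt h2
      _ = a + 3 * t^2 := Real.sqrt_sq (by positivity)
  -- conclude
  have hnn : 0 ≤ Real.log (opNorm2 M) - Real.log a :=
    sub_nonneg.mpr (Real.log_le_log ha0 hlow)
  rw [abs_of_nonneg hnn, ← Real.log_div hN0.ne' ha0.ne']
  have hdiv : opNorm2 M / a ≤ 1 + 6 * t^2 := by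
    rw [div_le_iff₀ ha0]
    nlinarith [sq_nonneg t]
  have hlog : Real.log (opNorm2 M / a) ≤ opNorm2 M / a - 1 :=
    Real.log_le_sub_one_of_pos (div_pos hN0 ha0)
  have : Real.log (opNorm2 M / a) ≤ 6 * t^2 := by linarith
  calc Real.log (opNorm2 M / a) ≤ 6 * t^2 := this
    _ = 6 * ‖z‖ ^ 2 * opNorm2 B ^ 2 := by rw [ht]; ring
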